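/- Optimality of r = 1 for sampled OUE: for every real ε > 0, all positive integers n and d, and every integer r with 1 ≤ r ≤ d, the sampled OUE variance satisfies d·4·e^{ε}/(n·(e^{ε} − 1)²) ≤ d·4·e^{ε/r}/(n·r·(e^{ε/r} − 1)²); that is, σ²₂,OUE(r) = d·4·e^{ε/r}/(n·r·(e^{ε/r} − 1)²) attains its minimum over r ∈ {1, …, d} at r = 1. -/

import Mathlib

lemma sinh_nat_mul_ge (t : ℝ) (ht : 0 ≤ t) : ∀ m : ℕ, (m : ℝ) * Real.sinh t ≤ Real.sinh ((m : ℝ) * t) := by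
  intro m
  induction m with
  | zero => simp
  | succ k ih =>
    have h1 : Real.sinh ((k : ℝ) * t + t) = Real.sinh ((k:ℝ)*t) * Real.cosh t + Real.cosh ((k:ℝ)*t) * Real.sinh t := Real.sinh_add _ _
    have hs1 : 0 ≤ Real.sinh ((k:ℝ)*t) := Real.sinh_nonneg_iff.mpr (by positivity)
    have hs2 : 0 ≤ Real.sinh t := Real.sinh_nonneg_iff.mpr ht
    have hc1 : 1 ≤ Real.cosh t := Real.one_le_cosh t
    have hc2 : 1 ≤ Real.cosh ((k:ℝ)*t) := Real.one_le_cosh _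
    have key : Real.sinh ((k:ℝ)*t) + Real.sinh t ≤ Real.sinh ((k : ℝ) * t + t) := by
      rw [h1]; nlinarith
    push_cast
    have hrw : ((k:ℝ)+1)*t = (k:ℝ)*t + t := by ring
    rw [hrw]
    nlinarith

lemma exp_sub_one_sq (a : ℝ) : (Real.exp a - 1) ^ 2 = 4 * Real.exp a * Real.sinh (a / 2) ^ 2 := by
  have h1 : Real.exp (a/2) * Real.exp (-(a/2)) = 1 := by
    rw [← Real.exp_add]; simp
  have h2 : Real.exp (a/2) * Real.exp (a/2) = Real.exp a := by
    rw [← Real.exp_add]; ring_nf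
  rw [Real.sinh_eq]
  rw [show -(a/2) = -(a/2) from rfl]
  nlinarith [h1, h2, sq_nonneg (Real.exp (a/2) - Real.exp (-(a/2)))]

theorem sampled_oue_optimal_r_one (ε : ℝ) (hε : 0 < ε) (n d : ℕ) (hn : 0 < n) (hd : 0 < d)
    (r : ℕ) (hr1 : 1 ≤ r) (hrd : r ≤ d) :
    (d : ℝ) * 4 * Real.exp ε / ((n : ℝ) * (Real.exp ε - 1) ^ 2)
      ≤ (d : ℝ) * 4 * Real.exp (ε / (r : ℝ))
          / ((n : ℝ) * (r : ℝ) * (Real.exp (ε / (r : ℝ)) - 1) ^ 2) := by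
  set x : ℝ := ε / (r : ℝ) with hx
  have hr0 : (0:ℝ) < (r:ℝ) := by exact_mod_cast hr1
  have hxpos : 0 < x := div_pos hε hr0
  have hεx : ε = (r:ℝ) * x := by rw [hx]; field_simp
  -- key: r * sinh(x/2)^2 ≤ sinh(ε/2)^2
  have hsinh : (r:ℝ) * Real.sinh (x/2) ≤ Real.sinh (ε/2) := by
    have := sinh_nat_mul_ge (x/2) (by positivity) r
    have heq : (r:ℝ) * (x/2) = ε/2 := by rw [hεx]; ring
    rwa [heq] at this
  have hs2 : 0 ≤ Real.sinh (x/2) := Real.sinh_nonneg_iff.mpr (by positivity)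
  have hr1' : (1:ℝ) ≤ (r:ℝ) := by exact_mod_cast hr1
  have hsle : Real.sinh (x/2) ≤ Real.sinh (ε/2) :=
    le_trans (le_mul_of_one_le_left hs2 hr1') hsinh
  have key : (r:ℝ) * Real.sinh (x/2) ^ 2 ≤ Real.sinh (ε/2) ^ 2 := by
    nlinarith [mul_le_mul_of_nonneg_right hsinh hs2, mul_le_mul_of_nonneg_left hsle (Real.sinh_nonneg_iff.mpr (by positivity : (0:ℝ) ≤ ε/2))]
  have hse : 0 < Real.sinh (ε/2) := Real.sinh_pos_iff.mpr (by positivity)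
  have hsx : 0 < Real.sinh (x/2) := Real.sinh_pos_iff.mpr (by positivity)
  have hne : 0 < (n:ℝ) := by exact_mod_cast hn
  have hde : 0 ≤ (d:ℝ) := by positivity
  have e1 := exp_sub_one_sq ε
  have e2 := exp_sub_one_sq x
  have hbe : 0 < (n:ℝ) * (Real.exp ε - 1)^2 := by
    rw [e1]; positivity
  have hbx : 0 < (n:ℝ) * (r:ℝ) * (Real.exp x - 1)^2 := by
    rw [e2]; positivity
  rw [div_le_div_iff₀ hbe hbx, e1, e2]
  have hexpε : 0 < Real.exp ε := Real.exp_pos _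
  have hexpx : 0 < Real.exp x := Real.exp_pos _
  nlinarith [mul_le_mul_of_nonneg_left key (by positivity : (0:ℝ) ≤ (d:ℝ) * 4 * Real.exp ε * Real.exp x * (n:ℝ) * 4)]
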